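/- Let 0 < p < ∞ and let u, w be weights on ℝ and (0,∞) respectively. Suppose the Hilbert transform H is well defined on Λ^p_u(w) (for every f ∈ Λ^p_u(w) the principal-value limit defining Hf(x) exists for a.e. x) and there is a constant C with ‖Hf‖_{Λ^{p,∞}_u(w)} ≤ C ‖f‖_{Λ^p_u(w)} for all f ∈ Λ^p_u(w). Then there is a constant C′ such that for every bounded interval I, ‖u^{−1}χ_I‖_{(Λ^p_u(w))′} · ‖χ_I‖_{Λ^p_u(w)} ≤ C′ |I|. -/

import Mathlib

open MeasureTheory Filter Topology
open scoped ENNReal NNReal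

noncomputable section

/-- The `u`-measure of a set `E`, `u(E) = ∫_E u`, as an extended nonnegative real. -/
def wMeas (u : ℝ → ℝ) (E : Set ℝ) : ℝ≥0∞ := ∫⁻ x in E, ENNReal.ofReal (u x)

/-- The `u`-measure of a set `E`, `u(E) = ∫_E u(x) dx`, as a real number. -/
def wInt (u : ℝ → ℝ) (E : Set ℝ) : ℝ := ∫ x in E, u x

/-- `W(r) = ∫_0^r w(s) ds`. -/
def Wf (w : ℝ → ℝ) (r : ℝ) : ℝ := ∫ t in Set.Ioo (0:ℝ) r, w t

/-- A weight on `ℝ`: a positive locally integrable function. -/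
def IsWeight (u : ℝ → ℝ) : Prop :=
  (∀ x, 0 < u x) ∧ MeasureTheory.LocallyIntegrable u volume

/-- A weight on `(0,∞)`: positive there and locally integrable on `(0,r)` for every `r > 0`. -/
def IsWeightOn (w : ℝ → ℝ) : Prop :=
  (∀ t, 0 < t → 0 < w t) ∧ ∀ r, 0 < r → MeasureTheory.IntegrableOn w (Set.Ioo (0:ℝ) r) volume

/-- Decreasing rearrangement (with respect to the weight `u`) of an `ℝ≥0∞`-valued function. -/
def rearrE (u : ℝ → ℝ) (g : ℝ → ℝ≥0∞) (t : ℝ) : ℝ≥0∞ :=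
  sInf {s : ℝ≥0∞ | wMeas u {x | s < g x} ≤ ENNReal.ofReal t}

/-- Decreasing rearrangement `f*_u` of `f` with respect to the weight `u`. -/
def rearr (u f : ℝ → ℝ) (t : ℝ) : ℝ≥0∞ :=
  rearrE u (fun x => ENNReal.ofReal |f x|) t

/-- The quasinorm of `Λ^p_u(w)` for `ℝ≥0∞`-valued functions. -/
def lorentzNormE (p : ℝ) (u w : ℝ → ℝ) (g : ℝ → ℝ≥0∞) : ℝ≥0∞ :=
  (∫⁻ t in Set.Ioi (0:ℝ), rearrE u g t ^ p * ENNReal.ofReal (w t)) ^ (1/p)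

/-- The quasinorm of the weighted Lorentz space `Λ^p_u(w)`. -/
def lorentzNorm (p : ℝ) (u w f : ℝ → ℝ) : ℝ≥0∞ :=
  lorentzNormE p u w (fun x => ENNReal.ofReal |f x|)

/-- The quasinorm of `Λ^{p,∞}_u(w)` for `ℝ≥0∞`-valued functions. -/
def weakLorentzNormE (p : ℝ) (u w : ℝ → ℝ) (g : ℝ → ℝ≥0∞) : ℝ≥0∞ :=
  ⨆ t ∈ Set.Ioi (0:ℝ), ENNReal.ofReal (Wf w t) ^ (1/p) * rearrE u g t

/-- The quasinorm of the weak weighted Lorentz space `Λ^{p,∞}_u(w)`. -/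
def weakLorentzNorm (p : ℝ) (u w f : ℝ → ℝ) : ℝ≥0∞ :=
  weakLorentzNormE p u w (fun x => ENNReal.ofReal |f x|)

/-- Membership in `Λ^p_u(w)`. -/
def MemLambda (p : ℝ) (u w f : ℝ → ℝ) : Prop :=
  Measurable f ∧ lorentzNorm p u w f < ∞

/-- The quasinorm of the Lorentz space `L^{p,q}(u)`, `0 < q ≤ ∞`. -/
def lpqNorm (p : ℝ) (q : ℝ≥0∞) (u f : ℝ → ℝ) : ℝ≥0∞ :=
  if q = ∞ then ⨆ t ∈ Set.Ioi (0:ℝ), ENNReal.ofReal t ^ (1/p) * rearr u f t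
  else (∫⁻ t in Set.Ioi (0:ℝ),
      (ENNReal.ofReal t ^ (1/p) * rearr u f t) ^ q.toReal / ENNReal.ofReal t) ^ (1/q.toReal)

/-- Membership in `L^{p,q}(u)`. -/
def MemLpq (p : ℝ) (q : ℝ≥0∞) (u f : ℝ → ℝ) : Prop :=
  Measurable f ∧ lpqNorm p q u f < ∞

/-- The associate norm `‖g‖_{(Λ^p_u(w))'}`. -/
def assocNorm (p : ℝ) (u w g : ℝ → ℝ) : ℝ≥0∞ :=
  ⨆ (f : ℝ → ℝ) (_ : MemLambda p u w f) (_ : lorentzNorm p u w f ≠ 0),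
    ENNReal.ofReal |∫ x, f x * g x * u x| / lorentzNorm p u w f

/-- The truncated Hilbert integral `∫_{|x−y|>ε} f(y)/(x−y) dy`. -/
def pvIntegral (f : ℝ → ℝ) (x ε : ℝ) : ℝ :=
  ∫ y in {y : ℝ | ε < |x - y|}, f y / (x - y)

/-- The principal value limit defining `Hf(x)` exists and equals `L`. -/
def HasHilbert (f : ℝ → ℝ) (x L : ℝ) : Prop :=
  Filter.Tendsto (fun ε : ℝ => (1 / Real.pi) * pvIntegral f x ε) (𝓝[>] 0) (𝓝 L)

/-- The Hilbert transform `Hf(x)` (junk value where the principal value does not exist). -/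
def hilbert (f : ℝ → ℝ) (x : ℝ) : ℝ :=
  limUnder (𝓝[>] (0:ℝ)) (fun ε => (1 / Real.pi) * pvIntegral f x ε)

/-- The Hilbert maximal operator `H*f(x)`. -/
def hilbertMax (f : ℝ → ℝ) (x : ℝ) : ℝ≥0∞ :=
  ⨆ ε ∈ Set.Ioi (0:ℝ), ENNReal.ofReal ((1 / Real.pi) * |pvIntegral f x ε|)

/-- The Hardy–Littlewood maximal operator over intervals of `ℝ`. -/
def maxOp (u : ℝ → ℝ) (x : ℝ) : ℝ≥0∞ :=
  ⨆ (a : ℝ) (b : ℝ) (_ : x ∈ Set.Ioo a b),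
    (∫⁻ y in Set.Ioo a b, ENNReal.ofReal |u y|) / ENNReal.ofReal (b - a)

/-- The Muckenhoupt class `A_1`: `Mu ≤ C u` a.e. -/
def A1 (u : ℝ → ℝ) : Prop :=
  ∃ C : ℝ, 0 < C ∧ ∀ᵐ x : ℝ ∂volume, maxOp u x ≤ ENNReal.ofReal (C * u x)

/-- The Muckenhoupt class `A_p`, `p > 1`. -/
def Ap (p : ℝ) (u : ℝ → ℝ) : Prop :=
  ∃ C : ℝ, 0 < C ∧ ∀ a b : ℝ, a < b →
    ((∫⁻ x in Set.Ioo a b, ENNReal.ofReal (u x)) / ENNReal.ofReal (b - a)) *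
      ((∫⁻ x in Set.Ioo a b, ENNReal.ofReal (u x ^ (-1 / (p - 1)))) /
        ENNReal.ofReal (b - a)) ^ (p - 1)
      ≤ ENNReal.ofReal C

/-- The class `B_p`: `∫_r^∞ (r/t)^p w(t) dt ≤ C W(r)`. -/
def Bp (p : ℝ) (w : ℝ → ℝ) : Prop :=
  ∃ C : ℝ, 0 < C ∧ ∀ r : ℝ, 0 < r →
    (∫⁻ t in Set.Ioi r, ENNReal.ofReal ((r / t) ^ p * w t)) ≤ ENNReal.ofReal (C * Wf w r)

/-- The class `B_{p,∞}`: the Hardy operator maps `L^p_dec(w)` to `L^{p,∞}(w)`. -/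
def BpInfty (p : ℝ) (w : ℝ → ℝ) : Prop :=
  ∃ C : ℝ, 0 < C ∧ ∀ f : ℝ → ℝ, (∀ t, 0 < t → 0 ≤ f t) → AntitoneOn f (Set.Ioi 0) →
    ∀ t : ℝ, 0 < t →
      ENNReal.ofReal (Wf w t) ^ (1/p) *
          ((∫⁻ s in Set.Ioo (0:ℝ) t, ENNReal.ofReal (f s)) / ENNReal.ofReal t)
        ≤ ENNReal.ofReal C *
            (∫⁻ s in Set.Ioi (0:ℝ), ENNReal.ofReal (f s) ^ p * ENNReal.ofReal (w s)) ^ (1/p)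

/-- The class `B*_∞`: `∫_0^r W(t)/t dt ≤ C W(r)`. -/
def BstarInfty (w : ℝ → ℝ) : Prop :=
  ∃ C : ℝ, 0 < C ∧ ∀ r : ℝ, 0 < r →
    (∫⁻ t in Set.Ioo (0:ℝ) r, ENNReal.ofReal (Wf w t / t)) ≤ ENNReal.ofReal (C * Wf w r)

/-- The `Δ_2` condition: `W(2r) ≤ C W(r)`. -/
def Delta2 (w : ℝ → ℝ) : Prop :=
  ∃ C : ℝ, 0 < C ∧ ∀ r : ℝ, 0 < r → Wf w (2 * r) ≤ C * Wf w r

/-- A doubling weight on `ℝ`: `u(2I) ≤ C u(I)` for every bounded interval `I`. -/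
def DoublingWeight (u : ℝ → ℝ) : Prop :=
  ∃ C : ℝ, 0 < C ∧ ∀ c r : ℝ, 0 < r →
    wInt u (Set.Ioo (c - 2*r) (c + 2*r)) ≤ C * wInt u (Set.Ioo (c - r) (c + r))

/-- `φ_I(t) = sup{|E| : E ⊆ I, u(E) = t}` for `I = (a,b)`. -/
def phiI (u : ℝ → ℝ) (a b t : ℝ) : ℝ :=
  sSup {m : ℝ | ∃ E : Set ℝ, MeasurableSet E ∧ E ⊆ Set.Ioo a b ∧
    wInt u E = t ∧ (volume E).toReal = m}

/-- The index `p_w`:  `inf{p > 0 : t^p/W(t) ∈ L^{p'-1}((0,1), dt/t)}`, where for `p ≤ 1`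
(`p' = ∞`) the condition means essential boundedness on `(0,1)`. -/
def pwIndex (w : ℝ → ℝ) : ℝ :=
  sInf {p : ℝ | 0 < p ∧
    ((p ≤ 1 ∧ ∃ C : ℝ, ∀ᵐ t ∂(volume.restrict (Set.Ioo (0:ℝ) 1)), t ^ p / Wf w t ≤ C) ∨
     (1 < p ∧ (∫⁻ t in Set.Ioo (0:ℝ) 1,
        ENNReal.ofReal ((t ^ p / Wf w t) ^ (1 / (p - 1)) / t)) < ∞))}

section Aux

open Set

lemma lintegral_ofReal_pos {v : ℝ → ℝ} {s : Set ℝ}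
    (hvm : AEMeasurable v (volume.restrict s))
    (hpos : ∀ x ∈ s, 0 < v x) (hs : MeasurableSet s) (hμ : volume s ≠ 0) :
    0 < ∫⁻ x in s, ENNReal.ofReal (v x) := by
  rw [pos_iff_ne_zero]
  intro h0
  have h0' : (fun x => ENNReal.ofReal (v x)) =ᶠ[ae (volume.restrict s)] 0 :=
    (lintegral_eq_zero_iff' (ENNReal.measurable_ofReal.comp_aemeasurable hvm)).1 h0
  have hfalse : ∀ᵐ x ∂(volume.restrict s), False := by
    filter_upwards [h0', ae_restrict_mem hs] with x hx hxs
    have h1 := hpos x hxs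
    simp only [Function.comp, Pi.zero_apply, ENNReal.ofReal_eq_zero] at hx
    linarith
  rw [Filter.eventually_false_iff_eq_bot, ae_eq_bot, Measure.restrict_eq_zero] at hfalse
  exact hμ hfalse

lemma wMeas_lt_top {u : ℝ → ℝ} (hu : IsWeight u) (a b : ℝ) :
    wMeas u (Set.Ioo a b) < ⊤ := by
  have hint : MeasureTheory.IntegrableOn u (Set.Ioo a b) volume :=
    (hu.2.integrableOn_isCompact isCompact_Icc).mono_set Set.Ioo_subset_Icc_self
  exact hint.lintegral_lt_top

lemma wMeas_pos {u : ℝ → ℝ} (hu : IsWeight u) {a b : ℝ} (hab : a < b) :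
    0 < wMeas u (Set.Ioo a b) := by
  have hint : MeasureTheory.IntegrableOn u (Set.Ioo a b) volume :=
    (hu.2.integrableOn_isCompact isCompact_Icc).mono_set Set.Ioo_subset_Icc_self
  refine lintegral_ofReal_pos hint.aestronglyMeasurable.aemeasurable
    (fun x _ => hu.1 x) measurableSet_Ioo ?_
  simp only [Real.volume_Ioo, ne_eq, ENNReal.ofReal_eq_zero, not_le]
  linarith

/-- `W` as a lower integral. -/
def We (w : ℝ → ℝ) (r : ℝ) : ℝ≥0∞ := ∫⁻ t in Set.Ioo (0:ℝ) r, ENNReal.ofReal (w t)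

lemma ofReal_Wf {w : ℝ → ℝ} (hw : IsWeightOn w) {r : ℝ} (hr : 0 < r) :
    ENNReal.ofReal (Wf w r) = We w r := by
  refine MeasureTheory.ofReal_integral_eq_lintegral_ofReal (hw.2 r hr) ?_
  exact (ae_restrict_iff' measurableSet_Ioo).2
    (Filter.Eventually.of_forall fun x hx => (hw.1 x hx.1).le)

lemma We_pos {w : ℝ → ℝ} (hw : IsWeightOn w) {r : ℝ} (hr : 0 < r) : 0 < We w r := by
  refine lintegral_ofReal_pos (hw.2 r hr).aestronglyMeasurable.aemeasurable
    (fun x hx => hw.1 x hx.1) measurableSet_Ioo ?_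
  simp [Real.volume_Ioo, hr]

lemma We_lt_top {w : ℝ → ℝ} (hw : IsWeightOn w) {r : ℝ} (hr : 0 < r) : We w r < ⊤ :=
  (hw.2 r hr).lintegral_lt_top

end Aux
section Rearr

open Set

lemma rearr_mono (u : ℝ → ℝ) {f g : ℝ → ℝ} (h : ∀ x, |g x| ≤ |f x|) (t : ℝ) :
    rearr u g t ≤ rearr u f t := by
  refine sInf_le_sInf fun s hs => ?_
  refine le_trans (lintegral_mono_set fun x hx => ?_) hs
  exact lt_of_lt_of_le hx (ENNReal.ofReal_le_ofReal (h x))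

lemma lorentzNorm_mono (p : ℝ) (hp : 0 < p) (u w : ℝ → ℝ) {f g : ℝ → ℝ}
    (h : ∀ x, |g x| ≤ |f x|) : lorentzNorm p u w g ≤ lorentzNorm p u w f := by
  refine ENNReal.rpow_le_rpow ?_ (by positivity)
  exact lintegral_mono fun t =>
    mul_le_mul' (ENNReal.rpow_le_rpow (rearr_mono u h t) hp.le) le_rfl

lemma rearr_indicator {u : ℝ → ℝ} {a b : ℝ} {t : ℝ} (ht : 0 < t) :
    rearr u ((Set.Ioo a b).indicator fun _ => (1:ℝ)) t
      = if ENNReal.ofReal t < wMeas u (Set.Ioo a b) then 1 else 0 := by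
  have hset : ∀ s : ℝ≥0∞,
      {x : ℝ | s < ENNReal.ofReal |(Set.Ioo a b).indicator (fun _ => (1:ℝ)) x|}
        = if s < 1 then Set.Ioo a b else (∅ : Set ℝ) := by
    intro s
    ext x
    by_cases hx : x ∈ Set.Ioo a b
    · simp [Set.indicator_of_mem hx, hx, ENNReal.ofReal_one]
    · simp [Set.indicator_of_notMem hx, hx, ENNReal.ofReal_zero]
  have hmeas : ∀ s : ℝ≥0∞,
      wMeas u {x : ℝ | s < ENNReal.ofReal |(Set.Ioo a b).indicator (fun _ => (1:ℝ)) x|}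
        = if s < 1 then wMeas u (Set.Ioo a b) else 0 := by
    intro s
    rw [hset s]
    split <;> simp [wMeas]
  rw [rearr, rearrE]
  split
  · rename_i hlt
    refine le_antisymm (sInf_le ?_) (le_sInf fun s hs => ?_)
    · simp only [Set.mem_setOf_eq, hmeas 1]
      simp
    · by_contra hcon
      push_neg at hcon
      simp only [Set.mem_setOf_eq, hmeas s, if_pos hcon] at hs
      exact absurd (lt_of_lt_of_le hlt hs) (lt_irrefl _)
  · rename_i hge
    push_neg at hge
    refine le_antisymm (sInf_le ?_) zero_le
    simp only [Set.mem_setOf_eq, hmeas 0]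
    split
    · exact hge
    · exact zero_le

lemma lorentzNorm_indicator {p : ℝ} (hp : 0 < p) {u w : ℝ → ℝ} (hu : IsWeight u)
    {a b : ℝ} (hab : a < b) :
    lorentzNorm p u w ((Set.Ioo a b).indicator fun _ => (1:ℝ))
      = (We w ((wMeas u (Set.Ioo a b)).toReal)) ^ (1/p) := by
  set r := (wMeas u (Set.Ioo a b)).toReal with hr
  rw [lorentzNorm, lorentzNormE]
  congr 1
  have hμtop : wMeas u (Set.Ioo a b) ≠ ⊤ := (wMeas_lt_top hu a b).ne
  have hstep : ∫⁻ t in Set.Ioi (0:ℝ),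
      rearrE u (fun x => ENNReal.ofReal |(Set.Ioo a b).indicator (fun _ => (1:ℝ)) x|) t ^ p
        * ENNReal.ofReal (w t)
      = ∫⁻ t in Set.Ioi (0:ℝ),
          (Set.Ioo (0:ℝ) r).indicator (fun t => ENNReal.ofReal (w t)) t := by
    refine setLIntegral_congr_fun measurableSet_Ioi (fun t ht => ?_)
    have h1 : rearrE u (fun x => ENNReal.ofReal |(Set.Ioo a b).indicator (fun _ => (1:ℝ)) x|) t
        = if ENNReal.ofReal t < wMeas u (Set.Ioo a b) then 1 else 0 := rearr_indicator ht
    rw [h1]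
    by_cases hlt : ENNReal.ofReal t < wMeas u (Set.Ioo a b)
    · have htr : t < r := (ENNReal.ofReal_lt_iff_lt_toReal (le_of_lt ht) hμtop).1 hlt
      rw [if_pos hlt, Set.indicator_of_mem (Set.mem_Ioo.mpr ⟨ht, htr⟩)]
      simp [ENNReal.one_rpow]
    · have htr : ¬ t < r := fun hc => hlt
        ((ENNReal.ofReal_lt_iff_lt_toReal (le_of_lt ht) hμtop).2 hc)
      rw [if_neg hlt, Set.indicator_of_notMem (fun hc => htr hc.2)]
      simp [ENNReal.zero_rpow_of_pos hp]
  rw [hstep, lintegral_indicator measurableSet_Ioo,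
    Measure.restrict_restrict measurableSet_Ioo]
  rw [Set.inter_eq_self_of_subset_left Set.Ioo_subset_Ioi_self]
  rfl

end Rearr
section Weak

open Set

lemma We_sup {w : ℝ → ℝ} (hw : IsWeightOn w) {r : ℝ} (hr : 0 < r) :
    We w r ≤ ⨆ n : ℕ, We w (r - r / (n + 2)) := by
  set tn : ℕ → ℝ := fun n => r - r / (n + 2) with htn
  have htn_pos : ∀ n, 0 < tn n := by
    intro n
    have h1 : r / (n + 2) < r := by
      rw [div_lt_iff₀ (by positivity)]
      nlinarith
    simpa [htn] using sub_pos.2 h1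
  have htn_lt : ∀ n, tn n < r := by
    intro n
    have : 0 < r / (n + 2) := by positivity
    simp only [htn]; linarith
  have htn_mono : Monotone tn := by
    intro m n hmn
    simp only [htn]
    have : r / (n + 2) ≤ r / (m + 2) := by
      apply div_le_div_of_nonneg_left hr.le (by positivity)
      have : (m:ℝ) ≤ n := Nat.cast_le.2 hmn
      linarith
    linarith
  set F : ℕ → ℝ → ℝ≥0∞ := fun n t => (Set.Ioo (0:ℝ) (tn n)).indicator
    (fun t => ENNReal.ofReal (w t)) t with hF
  have hFmeas : ∀ n, AEMeasurable (F n) volume := by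
    intro n
    rw [hF]
    refine (aemeasurable_indicator_iff measurableSet_Ioo).2 ?_
    exact ENNReal.measurable_ofReal.comp_aemeasurable
      (hw.2 (tn n) (htn_pos n)).aestronglyMeasurable.aemeasurable
  have hFmono : ∀ x, Monotone fun n => F n x := by
    intro x m n hmn
    simp only [hF]
    by_cases hx : x ∈ Set.Ioo (0:ℝ) (tn m)
    · rw [Set.indicator_of_mem hx, Set.indicator_of_mem
        (Set.Ioo_subset_Ioo_right (htn_mono hmn) hx)]
    · rw [Set.indicator_of_notMem hx]; exact zero_le
  have key : ∫⁻ x, (Set.Ioo (0:ℝ) r).indicator (fun t => ENNReal.ofReal (w t)) x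
      ≤ ∫⁻ x, ⨆ n, F n x := by
    refine lintegral_mono fun x => ?_
    by_cases hx : x ∈ Set.Ioo (0:ℝ) r
    · rw [Set.indicator_of_mem hx]
      obtain ⟨hx1, hx2⟩ := hx
      -- find n with x < tn n
      obtain ⟨n, hn⟩ := exists_nat_ge (r / (r - x))
      have hn2 : r / (r - x) < (n:ℝ) + 2 := by linarith
      have hrx : 0 < r - x := by linarith
      have : r / ((n:ℝ) + 2) < r - x := by
        rw [div_lt_iff₀ (by positivity)]
        rw [div_lt_iff₀ hrx] at hn2
        linarith
      have hxtn : x < tn n := by simp only [htn]; linarith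
      refine le_trans (le_of_eq ?_) (le_iSup _ n)
      show ENNReal.ofReal (w x) = F n x
      simp only [hF]
      exact (Set.indicator_of_mem (Set.mem_Ioo.mpr ⟨hx1, hxtn⟩)
        (fun t => ENNReal.ofReal (w t))).symm
    · rw [Set.indicator_of_notMem hx]; exact zero_le
  have hmc := lintegral_iSup' hFmeas (Filter.Eventually.of_forall hFmono)
  calc We w r = ∫⁻ x, (Set.Ioo (0:ℝ) r).indicator (fun t => ENNReal.ofReal (w t)) x := by
        rw [We, lintegral_indicator measurableSet_Ioo]
    _ ≤ ∫⁻ x, ⨆ n, F n x := key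
    _ = ⨆ n, ∫⁻ x, F n x := hmc
    _ = ⨆ n : ℕ, We w (r - r / (n + 2)) := by
        refine iSup_congr fun n => ?_
        rw [hF, lintegral_indicator measurableSet_Ioo]; rfl

lemma weak_lower {p : ℝ} (hp : 0 < p) {u w : ℝ → ℝ} (hu : IsWeight u) (hw : IsWeightOn w)
    {a b : ℝ} (hab : a < b) {h : ℝ → ℝ} {lam : ℝ}
    (hbound : ∀ x ∈ Set.Ioo a b, lam ≤ |h x|) :
    We w ((wMeas u (Set.Ioo a b)).toReal) ^ (1/p) * ENNReal.ofReal lam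
      ≤ weakLorentzNorm p u w h := by
  set μ := wMeas u (Set.Ioo a b) with hμ
  have hμpos : 0 < μ := wMeas_pos hu hab
  have hμtop : μ ≠ ⊤ := (wMeas_lt_top hu a b).ne
  set r := μ.toReal with hrdef
  have hr : 0 < r := ENNReal.toReal_pos hμpos.ne' hμtop
  -- rearrangement lower bound
  have hrearr : ∀ t : ℝ, 0 < t → t < r → ENNReal.ofReal lam ≤ rearr u h t := by
    intro t ht htr
    refine le_sInf fun s hs => ?_
    by_contra hcon
    push_neg at hcon
    have hsub : Set.Ioo a b ⊆ {x : ℝ | s < ENNReal.ofReal |h x|} := by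
      intro x hx
      exact lt_of_lt_of_le hcon (ENNReal.ofReal_le_ofReal (hbound x hx))
    have h1 : μ ≤ ENNReal.ofReal t := le_trans (lintegral_mono_set hsub) hs
    have h2 : ENNReal.ofReal t < μ := (ENNReal.ofReal_lt_iff_lt_toReal ht.le hμtop).2 htr
    exact absurd (lt_of_lt_of_le h2 h1) (lt_irrefl _)
  -- each t in (0, r) gives a lower bound for the weak norm
  have hterm : ∀ t : ℝ, 0 < t → t < r →
      ENNReal.ofReal (Wf w t) ^ (1/p) * ENNReal.ofReal lam ≤ weakLorentzNorm p u w h := by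
    intro t ht htr
    have : ENNReal.ofReal (Wf w t) ^ (1/p) * ENNReal.ofReal lam
        ≤ ENNReal.ofReal (Wf w t) ^ (1/p) * rearrE u (fun x => ENNReal.ofReal |h x|) t :=
      mul_le_mul' le_rfl (hrearr t ht htr)
    refine le_trans this ?_
    rw [weakLorentzNorm, weakLorentzNormE]
    exact le_iSup₂ (f := fun t _ => ENNReal.ofReal (Wf w t) ^ (1/p)
      * rearrE u (fun x => ENNReal.ofReal |h x|) t) t ht
  -- pass to the supremum along the sequence
  set tn : ℕ → ℝ := fun n => r - r / (n + 2) with htn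
  have htn_pos : ∀ n, 0 < tn n := by
    intro n
    have h1 : r / (n + 2) < r := by
      rw [div_lt_iff₀ (by positivity)]
      nlinarith
    simpa [htn] using sub_pos.2 h1
  have htn_lt : ∀ n, tn n < r := by
    intro n
    have : 0 < r / ((n:ℝ) + 2) := by positivity
    simp only [htn]; linarith
  have hsup : (⨆ n : ℕ, We w (tn n)) ^ (1/p) * ENNReal.ofReal lam
      ≤ weakLorentzNorm p u w h := by
    have hmi := (ENNReal.orderIsoRpow (1/p) (by positivity : (0:ℝ) < 1/p)).map_iSup
      (fun n : ℕ => We w (tn n))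
    simp only [ENNReal.orderIsoRpow_apply] at hmi
    rw [hmi, ENNReal.iSup_mul]
    refine iSup_le fun n => ?_
    rw [← ofReal_Wf hw (htn_pos n)]
    exact hterm (tn n) (htn_pos n) (htn_lt n)
  refine le_trans ?_ hsup
  exact mul_le_mul' (ENNReal.rpow_le_rpow (We_sup hw hr) (by positivity)) le_rfl

end Weak
section Hilbert

open Set

lemma hilbert_lower {g : ℝ → ℝ} (hg0 : ∀ y, 0 ≤ g y) (hgi : Integrable g volume)
    {x δ ℓ σ : ℝ} (hδ : 0 < δ) (hℓ : 0 < ℓ) (hσ : σ = 1 ∨ σ = -1)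
    (hsupp : ∀ y, g y ≠ 0 → δ ≤ σ * (x - y) ∧ σ * (x - y) ≤ 2 * ℓ) :
    (∫ y, g y) / (2 * Real.pi * ℓ) ≤ |hilbert g x| := by
  have hπ : (0:ℝ) < Real.pi := Real.pi_pos
  set ψ : ℝ → ℝ := fun y => g y / (x - y) with hψ
  have habs : ∀ y, g y ≠ 0 → |x - y| = σ * (x - y) := by
    intro y hy
    have h1 := (hsupp y hy).1
    rcases hσ with h | h
    · rw [h] at h1 ⊢; rw [one_mul] at h1 ⊢; exact abs_of_pos (lt_of_lt_of_le hδ h1)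
    · rw [h] at h1 ⊢
      have : x - y < 0 := by nlinarith
      rw [abs_of_neg this]; ring
  have hψm : AEStronglyMeasurable ψ volume := by
    have : ψ = fun y => g y * (x - y)⁻¹ := by funext y; simp only [hψ, div_eq_mul_inv]
    rw [this]
    exact hgi.aestronglyMeasurable.mul
      ((measurable_const.sub measurable_id).inv.aestronglyMeasurable)
  have hψi : Integrable ψ volume := by
    refine (hgi.mul_const δ⁻¹).mono hψm (Filter.Eventually.of_forall fun y => ?_)
    by_cases hy : g y = 0
    · simp [hψ, hy]
    · have h1 := (hsupp y hy).1
      have hxy : δ ≤ |x - y| := by rw [habs y hy]; exact h1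
      have hxy0 : x - y ≠ 0 := by
        intro hc; rw [hc, abs_zero] at hxy; linarith
      rw [Real.norm_eq_abs, Real.norm_eq_abs, abs_mul, abs_of_nonneg (hg0 y), abs_inv,
        abs_of_pos hδ, ← div_eq_mul_inv]
      have h3 : |ψ y| = g y / |x - y| := by
        simp only [hψ, abs_div, abs_of_nonneg (hg0 y)]
      rw [h3]
      gcongr
      exact hg0 y
  -- the truncated integrals are eventually constant
  have hconst : ∀ ε ∈ Set.Ioo (0:ℝ) δ, pvIntegral g x ε = ∫ y, ψ y := by
    intro ε hε
    rw [pvIntegral]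
    refine setIntegral_eq_integral_of_forall_compl_eq_zero fun y hy => ?_
    simp only [Set.mem_setOf_eq, not_lt] at hy
    have hgy : g y = 0 := by
      by_contra hc
      have := habs y hc
      have h1 := (hsupp y hc).1
      rw [← this] at h1
      linarith [hε.2]
    simp [hψ, hgy]
  have htend : Filter.Tendsto (fun ε : ℝ => (1 / Real.pi) * pvIntegral g x ε)
      (nhdsWithin 0 (Set.Ioi 0)) (nhds ((1 / Real.pi) * ∫ y, ψ y)) := by
    refine Filter.Tendsto.congr' ?_ tendsto_const_nhds
    filter_upwards [Ioo_mem_nhdsGT_of_mem (Set.mem_Ico.mpr ⟨le_refl (0:ℝ), hδ⟩)] with ε hε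
    rw [hconst ε hε]
  have hlim : hilbert g x = (1 / Real.pi) * ∫ y, ψ y := htend.limUnder_eq
  -- lower bound on the integral
  have hmono : (∫ y, g y) / (2 * ℓ) ≤ σ * ∫ y, ψ y := by
    have hpt : ∀ y, g y / (2 * ℓ) ≤ σ * ψ y := by
      intro y
      by_cases hy : g y = 0
      · simp [hψ, hy]
      · obtain ⟨h1, h2⟩ := hsupp y hy
        have hpos : 0 < σ * (x - y) := lt_of_lt_of_le hδ h1
        have : σ * ψ y = g y / (σ * (x - y)) := by
          rcases hσ with h | h <;> subst h <;> simp [hψ, div_neg]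
          have hyx : y - x = -(x - y) := by ring
          rw [hyx, div_neg]
        rw [this]
        gcongr
        exact hg0 y
    have hint1 : Integrable (fun y => g y / (2 * ℓ)) volume := hgi.div_const _
    have hint2 : Integrable (fun y => σ * ψ y) volume := hψi.const_mul σ
    calc (∫ y, g y) / (2 * ℓ) = ∫ y, g y / (2 * ℓ) := (integral_div _ _).symm
      _ ≤ ∫ y, σ * ψ y := integral_mono hint1 hint2 hpt
      _ = σ * ∫ y, ψ y := integral_const_mul σ ψ
  have hσabs : σ * ∫ y, ψ y ≤ |∫ y, ψ y| := by
    rcases hσ with h | h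
    · rw [h, one_mul]; exact le_abs_self _
    · rw [h, neg_one_mul]; exact neg_le_abs _
  calc (∫ y, g y) / (2 * Real.pi * ℓ) = (1 / Real.pi) * ((∫ y, g y) / (2 * ℓ)) := by
        rw [div_mul_div_comm, one_mul]
        congr 1
        ring
    _ ≤ (1 / Real.pi) * |∫ y, ψ y| := by
        apply mul_le_mul_of_nonneg_left (le_trans hmono hσabs) (by positivity)
    _ = |hilbert g x| := by
        rw [hlim, abs_mul, abs_of_pos (by positivity : (0:ℝ) < 1 / Real.pi)]

end Hilbert
section Key

open Set

lemma lorentzNorm_indicator_ne_zero {p : ℝ} (hp : 0 < p) {u w : ℝ → ℝ}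
    (hu : IsWeight u) (hw : IsWeightOn w) {a b : ℝ} (hab : a < b) :
    lorentzNorm p u w ((Set.Ioo a b).indicator fun _ => (1:ℝ)) ≠ 0 := by
  rw [lorentzNorm_indicator hp hu hab]
  have hr : 0 < (wMeas u (Set.Ioo a b)).toReal :=
    ENNReal.toReal_pos (wMeas_pos hu hab).ne' (wMeas_lt_top hu a b).ne
  rw [Ne, ENNReal.rpow_eq_zero_iff]
  push_neg
  constructor
  · intro h; exact absurd h (We_pos hw hr).ne'
  · intro h; exact absurd h (We_lt_top hw hr).ne

lemma lorentzNorm_indicator_ne_top {p : ℝ} (hp : 0 < p) {u w : ℝ → ℝ}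
    (hu : IsWeight u) (hw : IsWeightOn w) {a b : ℝ} (hab : a < b) :
    lorentzNorm p u w ((Set.Ioo a b).indicator fun _ => (1:ℝ)) ≠ ⊤ := by
  rw [lorentzNorm_indicator hp hu hab]
  have hr : 0 < (wMeas u (Set.Ioo a b)).toReal :=
    ENNReal.toReal_pos (wMeas_pos hu hab).ne' (wMeas_lt_top hu a b).ne
  rw [Ne, ENNReal.rpow_eq_top_iff]
  push_neg
  constructor
  · intro h; exact absurd h (We_pos hw hr).ne'
  · intro h; exact absurd h (We_lt_top hw hr).ne

lemma memLambda_indicator {p : ℝ} (hp : 0 < p) {u w : ℝ → ℝ}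
    (hu : IsWeight u) (hw : IsWeightOn w) {a b : ℝ} (hab : a < b) :
    MemLambda p u w ((Set.Ioo a b).indicator fun _ => (1:ℝ)) :=
  ⟨measurable_const.indicator measurableSet_Ioo,
    lt_top_iff_ne_top.2 (lorentzNorm_indicator_ne_top hp hu hw hab)⟩

lemma assoc_lower {p : ℝ} (hp : 0 < p) {u w : ℝ → ℝ} (hu : IsWeight u) (hw : IsWeightOn w)
    {c d : ℝ} (hcd : c < d) :
    ENNReal.ofReal (d - c)
      ≤ assocNorm p u w (fun x => (u x)⁻¹ * (Set.Ioo c d).indicator (fun _ => (1:ℝ)) x)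
          * lorentzNorm p u w ((Set.Ioo c d).indicator fun _ => (1:ℝ)) := by
  set χ : ℝ → ℝ := (Set.Ioo c d).indicator fun _ => (1:ℝ) with hχ
  set N := lorentzNorm p u w χ with hNdef
  have hN0 : N ≠ 0 := lorentzNorm_indicator_ne_zero hp hu hw hcd
  have hNtop : N ≠ ⊤ := lorentzNorm_indicator_ne_top hp hu hw hcd
  have hmem : MemLambda p u w χ := memLambda_indicator hp hu hw hcd
  have hIeq : (fun x => χ x * ((u x)⁻¹ * (Set.Ioo c d).indicator (fun _ => (1:ℝ)) x) * u x)
      = χ := by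
    funext x
    by_cases hx : x ∈ Set.Ioo c d
    · simp only [hχ, Set.indicator_of_mem hx]
      field_simp
      exact div_self (hu.1 x).ne'
    · simp [hχ, Set.indicator_of_notMem hx]
  have hint : ∫ x, χ x * ((u x)⁻¹ * (Set.Ioo c d).indicator (fun _ => (1:ℝ)) x) * u x
      = d - c := by
    rw [hIeq, hχ, integral_indicator_const (1:ℝ) measurableSet_Ioo]
    simp [Real.volume_Ioo, ENNReal.toReal_ofReal (le_of_lt (sub_pos.2 hcd)), hcd.le]
  have hle : ENNReal.ofReal (d - c) / N
      ≤ assocNorm p u w (fun x => (u x)⁻¹ * (Set.Ioo c d).indicator (fun _ => (1:ℝ)) x) := by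
    rw [assocNorm]
    have h1 : ENNReal.ofReal (d - c) / N
        = ENNReal.ofReal |∫ x, χ x * ((u x)⁻¹ * (Set.Ioo c d).indicator (fun _ => (1:ℝ)) x)
            * u x| / lorentzNorm p u w χ := by
      rw [hint, abs_of_nonneg (le_of_lt (sub_pos.2 hcd))]
    rw [h1]
    exact le_iSup_of_le χ (le_iSup_of_le hmem (le_iSup_of_le hN0 le_rfl))
  calc ENNReal.ofReal (d - c) = ENNReal.ofReal (d - c) / N * N :=
        (ENNReal.div_mul_cancel hN0 hNtop).symm
    _ ≤ _ := mul_le_mul' hle le_rfl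

lemma key_estimate {p : ℝ} (hp : 0 < p) {u w : ℝ → ℝ} (hu : IsWeight u) (hw : IsWeightOn w)
    {C : ℝ} (hC : 0 < C)
    (hbdd : ∀ f : ℝ → ℝ, MemLambda p u w f →
      weakLorentzNorm p u w (hilbert f) ≤ ENNReal.ofReal C * lorentzNorm p u w f)
    {a b c d ℓ σ : ℝ} (hab : a < b) (hcd : c < d) (hℓ : 0 < ℓ)
    (hσ : σ = 1 ∨ σ = -1)
    (hgeom : ∀ x ∈ Set.Ioo a b, ∃ δ, 0 < δ ∧ ∀ y ∈ Set.Ioo c d,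
      δ ≤ σ * (x - y) ∧ σ * (x - y) ≤ 2 * ℓ) :
    assocNorm p u w (fun x => (u x)⁻¹ * (Set.Ioo c d).indicator (fun _ => (1:ℝ)) x)
        * lorentzNorm p u w ((Set.Ioo a b).indicator fun _ => (1:ℝ))
      ≤ ENNReal.ofReal (2 * Real.pi * ℓ * C) := by
  have hπ := Real.pi_pos
  set N := lorentzNorm p u w ((Set.Ioo a b).indicator fun _ => (1:ℝ)) with hNdef
  have hN0 : N ≠ 0 := lorentzNorm_indicator_ne_zero hp hu hw hab
  have hNtop : N ≠ ⊤ := lorentzNorm_indicator_ne_top hp hu hw hab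
  have hsuff : assocNorm p u w
      (fun x => (u x)⁻¹ * (Set.Ioo c d).indicator (fun _ => (1:ℝ)) x)
      ≤ ENNReal.ofReal (2 * Real.pi * ℓ * C) / N := by
    rw [assocNorm]
    refine iSup_le fun f => iSup_le fun hf => iSup_le fun hfne => ?_
    have hIeq : ∫ x, f x * ((u x)⁻¹ * (Set.Ioo c d).indicator (fun _ => (1:ℝ)) x) * u x
        = ∫ x, f x * (Set.Ioo c d).indicator (fun _ => (1:ℝ)) x := by
      refine integral_congr_ae (Filter.Eventually.of_forall fun x => ?_)
      by_cases hx : x ∈ Set.Ioo c d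
      · simp only [Set.indicator_of_mem hx]
        field_simp
        rw [mul_div_assoc, div_self (hu.1 x).ne', mul_one]
      · simp [Set.indicator_of_notMem hx]
    by_cases hInt : Integrable
        (fun x => f x * (Set.Ioo c d).indicator (fun _ => (1:ℝ)) x) volume
    · -- integrable case
      set g : ℝ → ℝ := fun x => |f x| * (Set.Ioo c d).indicator (fun _ => (1:ℝ)) x with hg
      have hg0 : ∀ y, 0 ≤ g y := fun y => mul_nonneg (abs_nonneg _)
        (Set.indicator_nonneg (fun _ _ => zero_le_one) y)
      have hgabs : ∀ x, |g x| ≤ |f x| := by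
        intro x
        by_cases hx : x ∈ Set.Ioo c d
        · simp [hg, Set.indicator_of_mem hx, abs_abs]
        · simp [hg, Set.indicator_of_notMem hx, abs_nonneg]
      have hgi : Integrable g volume := by
        have hgeq : g = fun x => |f x * (Set.Ioo c d).indicator (fun _ => (1:ℝ)) x| := by
          funext x
          simp only [hg]
          rw [abs_mul]
          congr 1
          exact (abs_of_nonneg (Set.indicator_nonneg (fun _ _ => zero_le_one) x)).symm
        rw [hgeq]
        exact hInt.abs
      have hgm : Measurable g := hf.1.abs.mul (measurable_const.indicator measurableSet_Ioo)
      have hgmem : MemLambda p u w g :=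
        ⟨hgm, lt_of_le_of_lt (lorentzNorm_mono p hp u w hgabs) hf.2⟩
      set lam := (∫ y, g y) / (2 * Real.pi * ℓ) with hlam
      have hlam0 : 0 ≤ lam := div_nonneg (integral_nonneg hg0) (by positivity)
      have hHbound : ∀ x ∈ Set.Ioo a b, lam ≤ |hilbert g x| := by
        intro x hx
        obtain ⟨δ, hδ, hδxy⟩ := hgeom x hx
        refine hilbert_lower hg0 hgi hδ hℓ hσ fun y hy => ?_
        have hyJ : y ∈ Set.Ioo c d := by
          by_contra hc
          exact hy (by simp [hg, Set.indicator_of_notMem hc])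
        exact hδxy y hyJ
      have hweak := weak_lower hp hu hw hab hHbound
      rw [← lorentzNorm_indicator hp hu hab, ← hNdef] at hweak
      have hchain : N * ENNReal.ofReal lam ≤ ENNReal.ofReal C * lorentzNorm p u w f :=
        le_trans hweak (le_trans (hbdd g hgmem)
          (mul_le_mul' le_rfl (lorentzNorm_mono p hp u w hgabs)))
      have hftop : lorentzNorm p u w f ≠ ⊤ := hf.2.ne
      have hnum : |∫ x, f x * (Set.Ioo c d).indicator (fun _ => (1:ℝ)) x| ≤ ∫ y, g y := by
        have h1 : |∫ x, f x * (Set.Ioo c d).indicator (fun _ => (1:ℝ)) x|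
            ≤ ∫ x, |f x| * |(Set.Ioo c d).indicator (fun _ => (1:ℝ)) x| := by
          simpa [Real.norm_eq_abs, abs_mul] using norm_integral_le_integral_norm
            (μ := (volume : Measure ℝ))
            (fun x => f x * (Set.Ioo c d).indicator (fun _ => (1:ℝ)) x)
        refine le_trans h1 (le_of_eq (integral_congr_ae
          (Filter.Eventually.of_forall fun x => ?_)))
        simp only [hg]
        congr 1
        exact abs_of_nonneg (Set.indicator_nonneg (fun _ _ => zero_le_one) x)
      have hgval : ∫ y, g y = 2 * Real.pi * ℓ * lam := by
        rw [hlam]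
        field_simp
      rw [hIeq]
      rw [ENNReal.div_le_iff hfne hftop,
        mul_comm (ENNReal.ofReal (2 * Real.pi * ℓ * C) / N) (lorentzNorm p u w f),
        ← mul_div_assoc, ENNReal.le_div_iff_mul_le (Or.inl hN0) (Or.inl hNtop)]
      have hnum' : ENNReal.ofReal |∫ x, f x * (Set.Ioo c d).indicator (fun _ => (1:ℝ)) x|
          ≤ ENNReal.ofReal (2 * Real.pi * ℓ) * ENNReal.ofReal lam := by
        rw [← ENNReal.ofReal_mul (by positivity)]
        exact ENNReal.ofReal_le_ofReal (le_trans hnum (le_of_eq hgval))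
      calc ENNReal.ofReal |∫ x, f x * (Set.Ioo c d).indicator (fun _ => (1:ℝ)) x| * N
          ≤ (ENNReal.ofReal (2 * Real.pi * ℓ) * ENNReal.ofReal lam) * N :=
            mul_le_mul' hnum' le_rfl
        _ = ENNReal.ofReal (2 * Real.pi * ℓ) * (N * ENNReal.ofReal lam) := by ring
        _ ≤ ENNReal.ofReal (2 * Real.pi * ℓ) * (ENNReal.ofReal C * lorentzNorm p u w f) :=
            mul_le_mul' le_rfl hchain
        _ = lorentzNorm p u w f * (ENNReal.ofReal (2 * Real.pi * ℓ) * ENNReal.ofReal C) := by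
            ring
        _ = lorentzNorm p u w f * ENNReal.ofReal (2 * Real.pi * ℓ * C) := by
            rw [← ENNReal.ofReal_mul (by positivity)]
    · -- non-integrable case: the integral is zero
      rw [hIeq, integral_undef hInt]
      simp
  calc assocNorm p u w (fun x => (u x)⁻¹ * (Set.Ioo c d).indicator (fun _ => (1:ℝ)) x) * N
      ≤ ENNReal.ofReal (2 * Real.pi * ℓ * C) / N * N := mul_le_mul' hsuff le_rfl
    _ = ENNReal.ofReal (2 * Real.pi * ℓ * C) := ENNReal.div_mul_cancel hN0 hNtop

end Key
/-- the weak-type boundedness of `H` on `Λ^p_u(w)` implies the duality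
condition on intervals. -/
theorem duality_condition_of_weak_type (p : ℝ) (hp : 0 < p) (u w : ℝ → ℝ)
    (hu : IsWeight u) (hw : IsWeightOn w)
    (hdef : ∀ f : ℝ → ℝ, MemLambda p u w f → ∀ᵐ x : ℝ ∂volume, ∃ L, HasHilbert f x L)
    (hbdd : ∃ C : ℝ, 0 < C ∧ ∀ f : ℝ → ℝ, MemLambda p u w f →
      weakLorentzNorm p u w (hilbert f) ≤ ENNReal.ofReal C * lorentzNorm p u w f) :
    ∃ C' : ℝ, 0 < C' ∧ ∀ a b : ℝ, a < b →
      assocNorm p u w (fun x => (u x)⁻¹ * (Set.Ioo a b).indicator (fun _ => (1:ℝ)) x) *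
          lorentzNorm p u w ((Set.Ioo a b).indicator fun _ => (1:ℝ))
        ≤ ENNReal.ofReal (C' * (b - a)) := by
  obtain ⟨C, hC, hbdd⟩ := hbdd
  have hπ := Real.pi_pos
  refine ⟨4 * Real.pi ^ 2 * C ^ 2, by positivity, fun a b hab => ?_⟩
  set ℓ := b - a with hℓdef
  have hℓ : 0 < ℓ := sub_pos.2 hab
  have hJ : b < b + ℓ := by linarith
  set A := assocNorm p u w (fun x => (u x)⁻¹ * (Set.Ioo a b).indicator (fun _ => (1:ℝ)) x)
    with hA
  set B := assocNorm p u w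
    (fun x => (u x)⁻¹ * (Set.Ioo b (b + ℓ)).indicator (fun _ => (1:ℝ)) x) with hB
  set N := lorentzNorm p u w ((Set.Ioo a b).indicator fun _ => (1:ℝ)) with hN
  set M := lorentzNorm p u w ((Set.Ioo b (b + ℓ)).indicator fun _ => (1:ℝ)) with hM
  have hN0 : N ≠ 0 := lorentzNorm_indicator_ne_zero hp hu hw hab
  have hNtop : N ≠ ⊤ := lorentzNorm_indicator_ne_top hp hu hw hab
  have hM0 : M ≠ 0 := lorentzNorm_indicator_ne_zero hp hu hw hJ
  have hMtop : M ≠ ⊤ := lorentzNorm_indicator_ne_top hp hu hw hJ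
  -- support (a,b), measured on (b, b+ℓ), σ = 1
  have h1 : A * M ≤ ENNReal.ofReal (2 * Real.pi * ℓ * C) := by
    refine key_estimate hp hu hw hC hbdd hJ hab hℓ (Or.inl rfl) fun x hx => ?_
    obtain ⟨hx1, hx2⟩ := hx
    exact ⟨x - b, by linarith, fun y hy => by
      obtain ⟨hy1, hy2⟩ := hy
      constructor <;> [linarith; nlinarith]⟩
  -- support (b, b+ℓ), measured on (a,b), σ = -1
  have h2 : B * N ≤ ENNReal.ofReal (2 * Real.pi * ℓ * C) := by
    refine key_estimate hp hu hw hC hbdd hab hJ hℓ (Or.inr rfl) fun x hx => ?_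
    obtain ⟨hx1, hx2⟩ := hx
    exact ⟨b - x, by linarith, fun y hy => by
      obtain ⟨hy1, hy2⟩ := hy
      constructor <;> [linarith; nlinarith]⟩
  have h3 : ENNReal.ofReal ℓ ≤ B * M := by
    have h := assoc_lower hp hu hw hJ
    have heq : b + ℓ - b = ℓ := by ring
    rwa [heq] at h
  have hBM0 : B * M ≠ 0 := (lt_of_lt_of_le (ENNReal.ofReal_pos.2 hℓ) h3).ne'
  have hBtop : B ≠ ⊤ := by
    intro hBt
    rw [hBt, ENNReal.top_mul hN0] at h2
    exact (lt_irrefl ⊤ (lt_of_le_of_lt h2 ENNReal.ofReal_lt_top)).elim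
  have hBMtop : B * M ≠ ⊤ := ENNReal.mul_ne_top hBtop hMtop
  have hcross : (A * N) * (B * M)
      ≤ ENNReal.ofReal (2 * Real.pi * ℓ * C) * ENNReal.ofReal (2 * Real.pi * ℓ * C) := by
    calc (A * N) * (B * M) = (A * M) * (B * N) := by ring
      _ ≤ _ := mul_le_mul' h1 h2
  have hfinal : A * N ≤ ENNReal.ofReal ((2 * Real.pi * ℓ * C) * (2 * Real.pi * ℓ * C))
      / ENNReal.ofReal ℓ := by
    have hstep : A * N ≤ ENNReal.ofReal ((2 * Real.pi * ℓ * C) * (2 * Real.pi * ℓ * C))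
        / (B * M) := by
      rw [ENNReal.le_div_iff_mul_le (Or.inl hBM0) (Or.inl hBMtop),
        ENNReal.ofReal_mul (by positivity)]
      exact hcross
    exact le_trans hstep (ENNReal.div_le_div_left h3 _)
  refine le_trans hfinal (le_of_eq ?_)
  rw [← ENNReal.ofReal_div_of_pos hℓ]
  congr 1
  field_simp
  ring
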